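/- The total number of occurrences (copies) of a fixed binary tree pattern t with m leaves, summed over all full binary trees with n leaves, equals binomial(2n - m, n - m), for all n ≥ m ≥ 1. -/

import Mathlib

inductive BTree : Type
  | leaf : BTree
  | node : BTree → BTree → BTree
  deriving DecidableEq

namespace BTree

def leaves : BTree → ℕ
  | leaf => 1
  | node l r => leaves l + leaves r

def Matches : BTree → BTree → Bool
  | _, leaf => true
  | leaf, node _ _ => false
  | node l r, node tl tr => Matches l tl && Matches r tr

def Contains : BTree → BTree → Bool
  | leaf, t => Matches leaf t
  | node l r, t => Matches (node l r) t || Contains l t || Contains r t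

def Avoids (T t : BTree) : Prop := Contains T t = false

end BTree

namespace BTree

def copies (t : BTree) : BTree → ℕ
  | leaf => if Matches leaf t then 1 else 0
  | node l r => copies t l + copies t r + (if Matches (node l r) t then 1 else 0)

end BTree

namespace BTree

lemma one_le_leaves (T : BTree) : 1 ≤ T.leaves := by
  induction T with
  | leaf => simp [leaves]
  | node l r ihl ihr => simp [leaves]; omega

lemma eq_leaf_of_leaves_eq_one {t : BTree} (h : t.leaves = 1) : t = leaf := by
  cases t with
  | leaf => rfl
  | node l r =>
    have := one_le_leaves l; have := one_le_leaves r
    simp [leaves] at h; omega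

lemma leaves_le_of_matches : ∀ {T t : BTree}, Matches T t = true → t.leaves ≤ T.leaves
  | T, leaf, _ => one_le_leaves T
  | leaf, node _ _, h => by simp [Matches] at h
  | node l r, node tl tr, h => by
    simp [Matches] at h
    have h1 := leaves_le_of_matches h.1
    have h2 := leaves_le_of_matches h.2
    simp [leaves]; omega

lemma copies_eq_zero {t : BTree} : ∀ {T : BTree}, T.leaves < t.leaves → copies t T = 0
  | leaf, h => by
    simp only [copies]
    split
    · next hc => exact absurd (leaves_le_of_matches hc) (by omega)
    · rfl
  | node l r, h => by
    have h1 := one_le_leaves l; have h2 := one_le_leaves r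
    simp only [leaves] at h
    rw [copies, copies_eq_zero (t := t) (T := l) (by omega),
      copies_eq_zero (t := t) (T := r) (by omega)]
    split
    · next hc => exact absurd (leaves_le_of_matches hc) (by simp [leaves]; omega)
    · rfl

def S : ℕ → Finset BTree
  | 0 => ∅
  | 1 => {BTree.leaf}
  | (k+2) =>
    (Finset.range (k+1)).attach.biUnion (fun a =>
      ((S (a.1+1)) ×ˢ (S (k+1-a.1))).image (fun p => BTree.node p.1 p.2))
termination_by n => n
decreasing_by
  all_goals (have := a.2; simp only [Finset.mem_range] at this; omega)

lemma mem_S : ∀ (n : ℕ) (T : BTree), T ∈ S n ↔ T.leaves = n := by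
  intro n
  induction n using Nat.strong_induction_on with
  | _ n ih =>
    intro T
    match n with
    | 0 =>
      simp only [S]
      constructor
      · intro h; simp at h
      · intro h; have := one_le_leaves T; omega
    | 1 =>
      simp only [S, Finset.mem_singleton]
      constructor
      · rintro rfl; rfl
      · intro h; exact eq_leaf_of_leaves_eq_one h
    | (k+2) =>
      rw [S]
      simp only [Finset.mem_biUnion, Finset.mem_attach, Finset.mem_image, Finset.mem_product,
        true_and, Subtype.exists, Finset.mem_range]
      constructor
      · rintro ⟨a, ha, ⟨l, r⟩, ⟨hl, hr⟩, rfl⟩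
        rw [ih _ (by omega)] at hl
        rw [ih _ (by omega)] at hr
        simp [leaves, hl, hr]; omega
      · intro h
        cases T with
        | leaf => simp [leaves] at h
        | node l r =>
          have h1 := one_le_leaves l; have h2 := one_le_leaves r
          simp only [leaves] at h
          refine ⟨l.leaves - 1, by omega, ⟨l, r⟩, ⟨?_, ?_⟩, rfl⟩
          · rw [ih _ (by omega)]; simp only; omega
          · rw [ih _ (by omega)]; simp only; omega

lemma S_zero : S 0 = ∅ := by rw [S]

lemma S_one : S 1 = {BTree.leaf} := by rw [S]

lemma sum_S (g : BTree → ℕ) (k : ℕ) :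
    ∑ T ∈ S (k+2), g T =
      ∑ a ∈ Finset.range (k+1), ∑ l ∈ S (a+1), ∑ r ∈ S (k+1-a), g (node l r) := by
  rw [show S (k+2) = (Finset.range (k+1)).attach.biUnion (fun a =>
      ((S (a.1+1)) ×ˢ (S (k+1-a.1))).image (fun p => BTree.node p.1 p.2)) from by rw [S],
    Finset.sum_biUnion]
  · rw [← Finset.sum_attach (Finset.range (k+1))
      (fun a => ∑ l ∈ S (a+1), ∑ r ∈ S (k+1-a), g (node l r))]
    refine Finset.sum_congr rfl fun a _ => ?_
    rw [Finset.sum_image, Finset.sum_product]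
    rintro ⟨l1,r1⟩ h1 ⟨l2,r2⟩ h2 h
    simp only [node.injEq] at h
    simp [Prod.ext_iff, h.1, h.2]
  · intro a _ a' _ hne
    simp only [Function.onFun, Finset.disjoint_left]
    rintro T hT hT'
    simp only [Finset.mem_image, Finset.mem_product] at hT hT'
    obtain ⟨⟨l,r⟩, ⟨hl,hr⟩, rfl⟩ := hT
    obtain ⟨⟨l',r'⟩, ⟨hl',hr'⟩, heq⟩ := hT'
    simp only [node.injEq] at heq
    apply hne
    rw [mem_S] at hl hl'
    simp only at hl hl' heq
    apply Subtype.ext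
    rw [heq.1] at hl'
    omega

lemma card_S : ∀ n : ℕ, (S n).card = if n = 0 then 0 else catalan (n-1) := by
  intro n
  induction n using Nat.strong_induction_on with
  | _ n ih =>
    match n with
    | 0 => simp [S_zero]
    | 1 => simp [S_one]
    | (k+2) =>
      have : (S (k+2)).card = ∑ T ∈ S (k+2), 1 := by simp
      rw [this, sum_S (fun _ => 1) k]
      simp only [Nat.add_sub_cancel, if_neg (Nat.succ_ne_zero _)]
      rw [show k + 2 - 1 = k + 1 by omega, catalan_succ]
      rw [← Finset.sum_range (fun i => catalan i * catalan (k - i))]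
      refine Finset.sum_congr rfl fun a ha => ?_
      simp only [Finset.sum_const, smul_eq_mul, mul_one]
      simp only [Finset.mem_range] at ha
      rw [ih (a+1) (by omega), ih (k+1-a) (by omega)]
      rw [if_neg (by omega), if_neg (by omega)]
      have e2 : k+1-a-1 = k-a := by omega
      rw [Nat.add_sub_cancel, e2]

noncomputable def B : PowerSeries ℕ := PowerSeries.mk fun j => (S j).card

noncomputable def b (m n : ℕ) : ℕ := PowerSeries.coeff n (B ^ m)

lemma b_one (n : ℕ) : b 1 n = (S n).card := by
  simp [b, B, PowerSeries.coeff_mk]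

lemma b_succ' (m n : ℕ) : b (m+1) n = ∑ x ∈ Finset.range (n+1), b m x * b 1 (n - x) := by
  have h : B ^ (m+1) = B ^ m * B ^ 1 := by rw [pow_one, pow_succ]
  simp only [b, h, PowerSeries.coeff_mul]
  rw [Finset.Nat.sum_antidiagonal_eq_sum_range_succ_mk]

lemma b_zero_of_lt : ∀ m n : ℕ, n < m → b m n = 0 := by
  intro m
  induction m with
  | zero => intro n h; omega
  | succ m ih =>
    intro n h
    rw [b_succ']
    refine Finset.sum_eq_zero fun x hx => ?_
    simp only [Finset.mem_range] at hx
    rcases lt_or_ge x m with hxm | hxm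
    · rw [ih x hxm, zero_mul]
    · have : n - x = 0 := by omega
      rw [this, b_one, card_S, if_pos rfl, mul_zero]

lemma b_self (m : ℕ) (hm : 1 ≤ m) : b m m = 1 := by
  induction m with
  | zero => omega
  | succ m ih =>
    rcases Nat.eq_or_lt_of_le hm with h1 | h1
    · obtain rfl : m = 0 := by omega
      rw [b_one, card_S]; simp [S_one]
    · have hm' : 1 ≤ m := by omega
      rw [b_succ']
      rw [Finset.sum_eq_single m]
      · rw [ih hm', one_mul, b_one]
        have : m + 1 - m = 1 := by omega
        rw [this, card_S]
        simp [S_one]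
      · intro x hx hne
        simp only [Finset.mem_range] at hx
        rcases lt_or_ge x m with hxm | hxm
        · rw [b_zero_of_lt m x hxm, zero_mul]
        · have hx1 : x = m + 1 := by omega
          rw [hx1, Nat.sub_self, b_one, card_S, if_pos rfl, mul_zero]
      · intro h
        simp only [Finset.mem_range] at h
        omega

lemma M_eq (t : BTree) : ∀ n, (∑ T ∈ S n, (if Matches T t then 1 else 0)) = b t.leaves n := by
  induction t with
  | leaf =>
    intro n
    simp only [Matches, if_true, leaves, b_one]
    simp
  | node t1 t2 ih1 ih2 =>
    intro n
    have hm1 : 1 ≤ t1.leaves := one_le_leaves t1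
    have hm2 : 1 ≤ t2.leaves := one_le_leaves t2
    match n with
    | 0 =>
      rw [S_zero, Finset.sum_empty, b_zero_of_lt _ 0 (by simp [leaves]; omega)]
    | 1 =>
      rw [S_one, Finset.sum_singleton, b_zero_of_lt _ 1 (by simp [leaves]; omega)]
      simp [Matches]
    | (k+2) =>
      rw [sum_S (fun T => if Matches T (node t1 t2) then 1 else 0) k]
      have key : ∀ a ∈ Finset.range (k+1),
          (∑ l ∈ S (a+1), ∑ r ∈ S (k+1-a),
            (if Matches (node l r) (node t1 t2) then 1 else 0)) =
          b t1.leaves (a+1) * b t2.leaves (k+1-a) := by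
        intro a _
        rw [← ih1, ← ih2, Finset.sum_mul_sum]
        refine Finset.sum_congr rfl fun l _ => Finset.sum_congr rfl fun r _ => ?_
        simp only [Matches, Bool.and_eq_true]
        by_cases h1 : Matches l t1 = true <;> by_cases h2 : Matches r t2 = true <;>
          simp [h1, h2]
      rw [Finset.sum_congr rfl key]
      show _ = b (t1.leaves + t2.leaves) (k+2)
      have hmul : b (t1.leaves + t2.leaves) (k+2)
          = ∑ p ∈ Finset.HasAntidiagonal.antidiagonal (k+2), b t1.leaves p.1 * b t2.leaves p.2 := by
        simp only [b, pow_add, PowerSeries.coeff_mul]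
      have hr : b (t1.leaves + t2.leaves) (k+2)
          = ∑ a ∈ Finset.range (k+1), b t1.leaves (a+1) * b t2.leaves (k+1-a) := by
        rw [hmul, Finset.Nat.sum_antidiagonal_eq_sum_range_succ_mk,
          Finset.sum_range_succ' (fun x => b t1.leaves x * b t2.leaves (k+2-x)) (k+2)]
        rw [b_zero_of_lt _ 0 (by omega), zero_mul, add_zero,
          Finset.sum_range_succ (fun x => b t1.leaves (x+1) * b t2.leaves (k+2-(x+1))) (k+1)]
        rw [show k+2-(k+1+1) = 0 by omega, b_zero_of_lt t2.leaves 0 (by omega), mul_zero, add_zero]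
        refine Finset.sum_congr rfl fun a ha => ?_
        congr 2
        omega
      rw [hr]

lemma catalan_succ_range (s : ℕ) :
    catalan (s+1) = ∑ p ∈ Finset.range (s+1), catalan p * catalan (s - p) := by
  rw [catalan_succ', Finset.Nat.sum_antidiagonal_eq_sum_range_succ_mk]

lemma cat_plus (k : ℕ) (hk : 1 ≤ k) :
    catalan k + (2*k).choose (k-1) = (2*k).choose k := by
  have hpos : 0 < k + 1 := by omega
  apply Nat.eq_of_mul_eq_mul_left hpos
  have h1 : (k+1) * catalan k = (2*k).choose k := by
    rw [succ_mul_catalan_eq_centralBinom, Nat.centralBinom]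
  have h2 : (k+1) * ((2*k).choose (k-1)) = k * ((2*k).choose k) := by
    have h := Nat.choose_succ_right_eq (2*k) (k-1)
    rw [show k - 1 + 1 = k by omega, show 2*k - (k-1) = k+1 by omega] at h
    calc (k+1) * ((2*k).choose (k-1)) = (2*k).choose (k-1) * (k+1) := by ring
      _ = (2*k).choose k * k := h.symm
      _ = k * ((2*k).choose k) := by ring
  rw [Nat.mul_add, h1, h2]
  ring

lemma sum_tri (f : ℕ → ℕ → ℕ) (J : ℕ) :
    ∑ i ∈ Finset.range (J+1), ∑ p ∈ Finset.range (J+1-i), f i p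
      = ∑ p ∈ Finset.range (J+1), ∑ i ∈ Finset.range (J+1-p), f i p := by
  have h : ∀ (g : ℕ → ℕ → ℕ), (∑ i ∈ Finset.range (J+1), ∑ p ∈ Finset.range (J+1-i), g i p)
      = ∑ i ∈ Finset.range (J+1), ∑ p ∈ Finset.range (J+1), if i + p ≤ J then g i p else 0 := by
    intro g
    refine Finset.sum_congr rfl fun i hi => ?_
    simp only [Finset.mem_range] at hi
    rw [← Finset.sum_filter]
    apply Finset.sum_congr _ (fun _ _ => rfl)
    ext p
    simp only [Finset.mem_filter, Finset.mem_range]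
    omega
  rw [h f, h (fun p i => f i p), Finset.sum_comm]
  refine Finset.sum_congr rfl fun p _ => Finset.sum_congr rfl fun i _ => ?_
  rw [Nat.add_comm]

lemma Lstar (J : ℕ) : ∀ m : ℕ,
    (∑ i ∈ Finset.range (J+1), (2*i+m).choose i * catalan (J-i)) = (2*J+m+1).choose J := by
  induction J using Nat.strong_induction_on with
  | _ J ih =>
    intro m
    match J with
    | 0 => simp
    | (J+1) =>
      rw [Finset.sum_range_succ]
      have e1 : J + 1 - (J+1) = 0 := by omega
      rw [e1, catalan_zero, mul_one]
      have step1 : (∑ i ∈ Finset.range (J+1), (2*i+m).choose i * catalan (J+1-i))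
          = ∑ i ∈ Finset.range (J+1), ∑ p ∈ Finset.range (J+1-i),
              (2*i+m).choose i * (catalan p * catalan (J-i-p)) := by
        refine Finset.sum_congr rfl fun i hi => ?_
        simp only [Finset.mem_range] at hi
        rw [show J+1-i = (J-i)+1 by omega, catalan_succ_range, Finset.mul_sum]
      rw [step1, sum_tri]
      have step2 : (∑ p ∈ Finset.range (J+1), ∑ i ∈ Finset.range (J+1-p),
              (2*i+m).choose i * (catalan p * catalan (J-i-p)))
          = ∑ p ∈ Finset.range (J+1), catalan p * (2*(J-p)+m+1).choose (J-p) := by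
        refine Finset.sum_congr rfl fun p hp => ?_
        simp only [Finset.mem_range] at hp
        have hinner : (∑ i ∈ Finset.range (J+1-p),
              (2*i+m).choose i * (catalan p * catalan (J-i-p)))
            = catalan p * ∑ i ∈ Finset.range ((J-p)+1), (2*i+m).choose i * catalan ((J-p)-i) := by
          rw [Finset.mul_sum, show J+1-p = (J-p)+1 by omega]
          refine Finset.sum_congr rfl fun i hi => ?_
          simp only [Finset.mem_range] at hi
          rw [show J-i-p = J-p-i by omega]
          ring
        rw [hinner, ih (J-p) (by omega) m]
      rw [step2]
      have step3 : (∑ p ∈ Finset.range (J+1), catalan p * (2*(J-p)+m+1).choose (J-p))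
          = ∑ q ∈ Finset.range (J+1), (2*q+(m+1)).choose q * catalan (J-q) := by
        rw [← Finset.sum_range_reflect (fun q => (2*q+(m+1)).choose q * catalan (J-q)) (J+1)]
        refine Finset.sum_congr rfl fun p hp => ?_
        simp only [Finset.mem_range] at hp
        rw [show J+1-1-p = J-p by omega, show J - (J-p) = p by omega,
          show 2*(J-p)+(m+1) = 2*(J-p)+m+1 by omega]
        ring
      rw [step3, ih J (by omega) (m+1)]
      rw [show 2*J+(m+1)+1 = (2*J+m+1)+1 by ring, show 2*(J+1)+m = (2*J+m+1)+1 by ring]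
      exact (Nat.choose_succ_succ ((2*J+m+1)+1) J).symm

lemma bval : ∀ m' d' : ℕ,
    b (m'+1) (m'+d'+2) + (2*d'+m'+2).choose d' = (2*d'+m'+2).choose (d'+1) := by
  intro m'
  induction m' with
  | zero =>
    intro d'
    have h1 : b 1 (0+d'+2) = catalan (d'+1) := by
      rw [b_one, card_S]; simp
    rw [h1]
    have h := cat_plus (d'+1) (by omega)
    rw [show 2*(d'+1) = 2*d'+0+2 by ring, show d'+1-1 = d' by omega] at h
    exact h
  | succ m' ih =>
    intro d'
    have hb : b (m'+1+1) (m'+1+d'+2)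
        = catalan (d'+1) + ∑ e' ∈ Finset.range (d'+1), b (m'+1) (m'+e'+2) * catalan (d'-e') := by
      rw [b_succ']
      rw [show m'+1+d'+2+1 = (m'+1) + (d'+3) by ring, Finset.sum_range_add]
      have hz : (∑ x ∈ Finset.range (m'+1), b (m'+1) x * b 1 (m'+1+d'+2 - x)) = 0 := by
        refine Finset.sum_eq_zero fun x hx => ?_
        simp only [Finset.mem_range] at hx
        rw [b_zero_of_lt (m'+1) x hx, zero_mul]
      rw [hz, zero_add]
      rw [show d'+3 = (d'+2)+1 by ring, Finset.sum_range_succ]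
      rw [show m'+1+d'+2 - (m'+1+(d'+2)) = 0 by omega, b_one, card_S, if_pos rfl,
        mul_zero, add_zero]
      rw [Finset.sum_range_succ' (fun e => b (m'+1) (m'+1+e) * b 1 (m'+1+d'+2 - (m'+1+e))) (d'+1)]
      rw [show m'+1+0 = m'+1 by ring, show m'+1+d'+2-(m'+1) = d'+2 by omega,
        b_self (m'+1) (by omega), one_mul,
        b_one, card_S, if_neg (by omega), show d'+2-1 = d'+1 by omega, add_comm]
      congr 1
      refine Finset.sum_congr rfl fun e' he' => ?_
      simp only [Finset.mem_range] at he'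
      rw [show m'+1+(e'+1) = m'+e'+2 by ring, show m'+1+d'+2-(m'+e'+2) = d'+1-e' by omega,
        b_one, card_S, if_neg (by omega), show d'+1-e'-1 = d'-e' by omega]
    have hA : (∑ e' ∈ Finset.range (d'+1), (2*e'+m'+2).choose e' * catalan (d'-e'))
        = (2*d'+m'+3).choose d' := by
      have h := Lstar d' (m'+2)
      rw [show 2*d'+(m'+2)+1 = 2*d'+m'+3 by ring] at h
      rw [← h]
      exact Finset.sum_congr rfl fun e' _ => by rw [show 2*e'+(m'+2) = 2*e'+m'+2 by ring]
    have hL : catalan (d'+1) + (∑ e' ∈ Finset.range (d'+1), (2*e'+m'+2).choose (e'+1) * catalan (d'-e'))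
        = (2*d'+m'+3).choose (d'+1) := by
      have h0 := Lstar (d'+1) m'
      rw [Finset.sum_range_succ' (fun i => (2*i+m').choose i * catalan (d'+1-i)) (d'+1)] at h0
      rw [show 2*(d'+1)+m'+1 = 2*d'+m'+3 by ring] at h0
      rw [← h0]
      rw [show (2*0+m' : ℕ) = m' by ring, Nat.choose_zero_right, one_mul,
        show d'+1-0 = d'+1 by omega, add_comm]
      congr 1
      refine Finset.sum_congr rfl fun e' he' => ?_
      simp only [Finset.mem_range] at he'
      rw [show 2*(e'+1)+m' = 2*e'+m'+2 by ring, show d'+1-(e'+1) = d'-e' by omega]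
    have hcomb : (∑ e' ∈ Finset.range (d'+1), b (m'+1) (m'+e'+2) * catalan (d'-e'))
        + (∑ e' ∈ Finset.range (d'+1), (2*e'+m'+2).choose e' * catalan (d'-e'))
        = ∑ e' ∈ Finset.range (d'+1), (2*e'+m'+2).choose (e'+1) * catalan (d'-e') := by
      rw [← Finset.sum_add_distrib]
      refine Finset.sum_congr rfl fun e' _ => ?_
      rw [← Nat.add_mul, ih e']
    rw [show 2*d'+(m'+1)+2 = 2*d'+m'+3 by ring, hb]
    omega

lemma F_zero (t : BTree) (j : ℕ) (hj : j < t.leaves) :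
    (∑ T ∈ S j, copies t T) = 0 := by
  refine Finset.sum_eq_zero fun T hT => ?_
  rw [mem_S] at hT
  exact copies_eq_zero (by omega)

lemma Frec (t : BTree) (k : ℕ) :
    (∑ T ∈ S (k+2), copies t T)
      = (∑ a ∈ Finset.range (k+1),
          ((∑ l ∈ S (a+1), copies t l) * (S (k+1-a)).card
            + (S (a+1)).card * (∑ r ∈ S (k+1-a), copies t r)))
        + b t.leaves (k+2) := by
  rw [sum_S (copies t) k, ← M_eq t (k+2), sum_S (fun T => if Matches T t then 1 else 0) k,
    ← Finset.sum_add_distrib]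
  refine Finset.sum_congr rfl fun a _ => ?_
  have inner : ∀ l, (∑ r ∈ S (k+1-a), copies t (node l r))
      = copies t l * (S (k+1-a)).card + (∑ r ∈ S (k+1-a), copies t r)
        + (∑ r ∈ S (k+1-a), if Matches (node l r) t then 1 else 0) := by
    intro l
    simp only [copies]
    rw [Finset.sum_add_distrib, Finset.sum_add_distrib, Finset.sum_const, smul_eq_mul, mul_comm]
  rw [Finset.sum_congr rfl (fun l _ => inner l)]
  rw [Finset.sum_add_distrib, Finset.sum_add_distrib, ← Finset.sum_mul, Finset.sum_const,
    smul_eq_mul]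

lemma F_val (t : BTree) (m : ℕ) (hm : t.leaves = m) (hm1 : 1 ≤ m) :
    ∀ d : ℕ, (∑ T ∈ S (m+d), copies t T) = (m+2*d).choose d := by
  intro d
  induction d using Nat.strong_induction_on with
  | _ d ih =>
    match d, ih with
    | 0, _ =>
      rcases Nat.eq_or_lt_of_le hm1 with h1 | h1
      · have ht : t = leaf := eq_leaf_of_leaves_eq_one (by omega)
        subst ht
        rw [show m + 0 = 1 by omega, S_one, Finset.sum_singleton]
        simp [copies, Matches, show m = 1 by omega]
      · obtain ⟨k, hk⟩ : ∃ k, m = k + 2 := ⟨m - 2, by omega⟩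
        rw [show m + 0 = k + 2 by omega, Frec, hm]
        have hz : (∑ a ∈ Finset.range (k+1),
            ((∑ l ∈ S (a+1), copies t l) * (S (k+1-a)).card
              + (S (a+1)).card * (∑ r ∈ S (k+1-a), copies t r))) = 0 := by
          refine Finset.sum_eq_zero fun a ha => ?_
          simp only [Finset.mem_range] at ha
          rw [F_zero t (a+1) (by omega), F_zero t (k+1-a) (by omega)]
          simp
        rw [hz, zero_add, show k + 2 = m by omega, b_self m hm1]
        simp
    | (d''+1), ih =>
      set d := d'' + 1 with hd
      obtain ⟨k, hk⟩ : ∃ k, m + d = k + 2 := ⟨m + d - 2, by omega⟩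
      rw [show m + d = k + 2 from hk, Frec, hm]
      have hS1 : (∑ a ∈ Finset.range (k+1), (∑ l ∈ S (a+1), copies t l) * (S (k+1-a)).card)
          = (2*d''+m+1).choose d'' := by
        have hsplit : (k:ℕ) + 1 = (m-1) + d := by omega
        rw [hsplit, Finset.sum_range_add]
        have h1 : (∑ x ∈ Finset.range (m-1),
            (∑ l ∈ S (x+1), copies t l) * (S (m-1+d-x)).card) = 0 := by
          refine Finset.sum_eq_zero fun a ha => ?_
          simp only [Finset.mem_range] at ha
          rw [F_zero t (a+1) (by omega), zero_mul]
        rw [h1, zero_add]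
        have h2 : ∀ i ∈ Finset.range d,
            (∑ l ∈ S (m-1+i+1), copies t l) * (S (m-1+d-(m-1+i))).card
              = (2*i+m).choose i * catalan (d''-i) := by
          intro i hi
          simp only [Finset.mem_range] at hi
          rw [show m-1+i+1 = m+i by omega, ih i (by omega), card_S,
            if_neg (by omega), show m-1+d-(m-1+i)-1 = d''-i by omega,
            show m+2*i = 2*i+m by ring]
        rw [Finset.sum_congr rfl h2, show (d:ℕ) = d''+1 from hd]
        exact Lstar d'' m
      have hS2 : (∑ a ∈ Finset.range (k+1), (S (a+1)).card * (∑ r ∈ S (k+1-a), copies t r))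
          = ∑ a ∈ Finset.range (k+1), (∑ l ∈ S (a+1), copies t l) * (S (k+1-a)).card := by
        rw [← Finset.sum_range_reflect
          (fun a => (S (a+1)).card * (∑ r ∈ S (k+1-a), copies t r)) (k+1)]
        refine Finset.sum_congr rfl fun a ha => ?_
        simp only [Finset.mem_range] at ha
        rw [show k+1-1-a = k-a by omega, show k+1-(k-a) = a+1 by omega,
          show k-a+1 = k+1-a by omega, mul_comm]
      rw [Finset.sum_add_distrib, hS1, hS2, hS1]
      have hb := bval (m-1) d''
      rw [show m-1+1 = m by omega, show (m-1)+d''+2 = k+2 by omega,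
        show 2*d''+(m-1)+2 = 2*d''+m+1 by omega] at hb
      have hp : (2*d''+m+1+1).choose (d''+1) = (2*d''+m+1).choose d'' + (2*d''+m+1).choose (d''+1) :=
        Nat.choose_succ_succ _ _
      rw [show m+2*d = 2*d''+m+1+1 by omega, show (d:ℕ) = d''+1 from hd]
      omega

end BTree

theorem stmt_14 (t : BTree) (m n : ℕ) (hm : t.leaves = m) (hm1 : 1 ≤ m)
    (hmn : m ≤ n) :
    ∑ᶠ T ∈ {T : BTree | T.leaves = n}, BTree.copies t T =
      Nat.choose (2 * n - m) (n - m) := by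
  have hset : {T : BTree | T.leaves = n} = ↑(BTree.S n) := by
    ext T; simp [BTree.mem_S]
  rw [hset, finsum_mem_coe_finset]
  obtain ⟨d, rfl⟩ : ∃ d, n = m + d := ⟨n - m, by omega⟩
  rw [BTree.F_val t m hm hm1 d]
  congr 1 <;> omega
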